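/- arXiv:2311.17481 — 12 statements merged into one kernel-verified Lean document; each statement's English description precedes it below -/
import Mathlib

section
/- For all positive reals x1, x2, x3 with x1 + x2 + x3 = 1, one has 1/x1 + 1/x2 + 1/x3 ≥ 25 / (1 + 48·x1·x2·x3). -/
theorem stmt_1 (x1 x2 x3 : ℝ) (hx1 : 0 < x1) (hx2 : 0 < x2) (hx3 : 0 < x3)
    (hsum : x1 + x2 + x3 = 1) :
    1 / x1 + 1 / x2 + 1 / x3 ≥ 25 / (1 + 48 * (x1 * x2 * x3)) := by
  have hp : 0 < x1 * x2 * x3 := by positivity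
  have hd : 0 < 1 + 48 * (x1 * x2 * x3) := by positivity
  have key : (x1*x2 + x2*x3 + x3*x1) * (1 + 48 * (x1*x2*x3)) ≥ 25 * (x1*x2*x3) := by
    have e : (x1*x2 + x2*x3 + x3*x1) * (1 + 48 * (x1*x2*x3)) - 25 * (x1*x2*x3) =
        x3*(x1-x2)^2*(3*x3-x1-x2)^2 + x1*(x2-x3)^2*(3*x1-x2-x3)^2
          + x2*(x3-x1)^2*(3*x2-x3-x1)^2 := by
      linear_combination (-((x1*x2+x2*x3+x3*x1)*(1+(x1+x2+x3)+(x1+x2+x3)^2))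
        + 25*(x1*x2*x3)*(1+(x1+x2+x3))) * hsum
    nlinarith [mul_nonneg (mul_nonneg hx3.le (sq_nonneg (x1-x2))) (sq_nonneg (3*x3-x1-x2)),
      mul_nonneg (mul_nonneg hx1.le (sq_nonneg (x2-x3))) (sq_nonneg (3*x1-x2-x3)),
      mul_nonneg (mul_nonneg hx2.le (sq_nonneg (x3-x1))) (sq_nonneg (3*x2-x3-x1)), e]
  have h1 : 1 / x1 + 1 / x2 + 1 / x3 = (x1*x2 + x2*x3 + x3*x1) / (x1*x2*x3) := by
    field_simp; ring
  rw [h1, ge_iff_le, div_le_div_iff₀ hd hp]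
  nlinarith [key, hp]
end

section
/- For all real numbers x1, x2, x3 ≥ 0, setting s1 = x1+x2+x3, s2 = x1x2+x2x3+x3x1, s3 = x1x2x3, one has s1^3·s2 + 48·s2·s3 - 25·s1^2·s3 ≥ 0. -/
theorem stmt_3 (x1 x2 x3 : ℝ) (hx1 : 0 ≤ x1) (hx2 : 0 ≤ x2) (hx3 : 0 ≤ x3) :
    (x1 + x2 + x3) ^ 3 * (x1 * x2 + x2 * x3 + x3 * x1)
      + 48 * (x1 * x2 + x2 * x3 + x3 * x1) * (x1 * x2 * x3)
      - 25 * (x1 + x2 + x3) ^ 2 * (x1 * x2 * x3) ≥ 0 := by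
  nlinarith [mul_nonneg hx1 (sq_nonneg ((x2 - x3) * (x2 + x3 - 3 * x1))),
    mul_nonneg hx2 (sq_nonneg ((x3 - x1) * (x3 + x1 - 3 * x2))),
    mul_nonneg hx3 (sq_nonneg ((x1 - x2) * (x1 + x2 - 3 * x3)))]
end

section
/- For any triangle with sides a, b, c, circumradius R, and inradius r, one has R/r ≥ 2 + 8·((a-b)^2 + (b-c)^2 + (c-a)^2)/(a+b+c)^2. -/
theorem aux2 (x y z : ℝ) (hz : 0 < z) (h1 : z ≤ y) (h2 : y ≤ x) :
    8*x*y*z*((x+y+z)^2 + (x-y)^2+(y-z)^2+(z-x)^2) ≤ (x+y)*(y+z)*(z+x)*(x+y+z)^2 := by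
  have hu : 0 ≤ x - y := by linarith
  have hv : 0 ≤ y - z := by linarith
  have hz' : 0 ≤ z := hz.le
  nlinarith [mul_nonneg (mul_nonneg (sq_nonneg (x-y)) hz') (sq_nonneg (x-y-z)),
    mul_nonneg (mul_nonneg (mul_nonneg hu hv) (sq_nonneg (x-y-z))) (by linarith : (0:ℝ) ≤ 2*z + (x-y)),
    mul_nonneg (sq_nonneg (y-z)) (mul_nonneg (mul_nonneg hz' hz') hz'),
    mul_nonneg (sq_nonneg (y-z)) (mul_nonneg (mul_nonneg hv hz') hz'),
    mul_nonneg (mul_nonneg (sq_nonneg (y-z)) (sq_nonneg (y-z))) hz',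
    mul_nonneg (mul_nonneg (sq_nonneg (y-z)) (sq_nonneg (y-z))) hv,
    mul_nonneg (mul_nonneg hu (sq_nonneg (y-z))) (mul_nonneg hz' hz'),
    mul_nonneg (mul_nonneg hu (sq_nonneg (y-z))) (mul_nonneg hv hz'),
    mul_nonneg (mul_nonneg hu (sq_nonneg (y-z))) (sq_nonneg (y-z)),
    mul_nonneg (mul_nonneg (sq_nonneg (x-y)) (sq_nonneg (y-z))) hz',
    mul_nonneg (mul_nonneg (sq_nonneg (x-y)) (sq_nonneg (y-z))) hv,
    mul_nonneg (mul_nonneg (sq_nonneg (x-y)) (sq_nonneg (y-z))) hu]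

theorem aux (x y z : ℝ) (hx : 0 < x) (hy : 0 < y) (hz : 0 < z) :
    8*x*y*z*((x+y+z)^2 + (x-y)^2+(y-z)^2+(z-x)^2) ≤ (x+y)*(y+z)*(z+x)*(x+y+z)^2 := by
  rcases le_total x y with h1 | h1 <;> rcases le_total y z with h2 | h2 <;>
    rcases le_total x z with h3 | h3
  · nlinarith [aux2 z y x hx h1 h2]
  · nlinarith [aux2 z y x hx h1 h2]
  · nlinarith [aux2 y z x hx h3 h2]
  · nlinarith [aux2 y x z hz h3 h1]
  · nlinarith [aux2 z x y hy h1 h3]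
  · nlinarith [aux2 x z y hy h2 h3]
  · nlinarith [aux2 x y z hz h2 h1]
  · nlinarith [aux2 x y z hz h2 h1]

theorem stmt_5 (a b c s K R r : ℝ)
    (ha : 0 < a) (hb : 0 < b) (hc : 0 < c)
    (hab : a < b + c) (hbc : b < a + c) (hca : c < a + b)
    (hs : s = (a + b + c) / 2)
    (hK : K = Real.sqrt (s * (s - a) * (s - b) * (s - c)))
    (hR : R = a * b * c / (4 * K))
    (hr : r = K / s) :
    R / r ≥ 2 + 8 * ((a - b) ^ 2 + (b - c) ^ 2 + (c - a) ^ 2) / (a + b + c) ^ 2 := by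
  have hsa : 0 < s - a := by rw [hs]; linarith
  have hsb : 0 < s - b := by rw [hs]; linarith
  have hsc : 0 < s - c := by rw [hs]; linarith
  have hsp : 0 < s := by rw [hs]; linarith
  have hprod : 0 < s * (s - a) * (s - b) * (s - c) := by positivity
  have hKpos : 0 < K := by rw [hK]; exact Real.sqrt_pos.mpr hprod
  have hK2 : K ^ 2 = s * (s - a) * (s - b) * (s - c) := by
    rw [hK, Real.sq_sqrt hprod.le]
  have habc : 0 < a + b + c := by linarith
  have hT : (0:ℝ) < (a + b + c) ^ 2 := by positivity
  have hRr : R / r = a * b * c * s / (4 * K ^ 2) := by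
    rw [hR, hr]
    field_simp
  rw [ge_iff_le, hRr, hK2]
  have h4 : (0:ℝ) < 4 * (s * (s - a) * (s - b) * (s - c)) := by positivity
  rw [le_div_iff₀ h4]
  have e : (2 + 8 * ((a - b) ^ 2 + (b - c) ^ 2 + (c - a) ^ 2) / (a + b + c) ^ 2) *
      (4 * (s * (s - a) * (s - b) * (s - c))) =
      ((2 * (a + b + c) ^ 2 + 8 * ((a - b) ^ 2 + (b - c) ^ 2 + (c - a) ^ 2)) *
        (4 * (s * (s - a) * (s - b) * (s - c)))) / (a + b + c) ^ 2 := by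
    field_simp
  rw [e, div_le_iff₀ hT]
  subst hs
  have key := mul_le_mul_of_nonneg_left
    (aux (b + c - a) (c + a - b) (a + b - c) (by linarith) (by linarith) (by linarith)) habc.le
  nlinarith [key]
end

section
/- For any triangle with sides a, b, c: a^3/(b+c-a) + b^3/(a+c-b) + c^3/(a+b-c) + 7(ab+bc+ca) ≥ 8(a^2+b^2+c^2). -/
theorem stmt_6 (a b c : ℝ) (ha : 0 < a) (hb : 0 < b) (hc : 0 < c)
    (hab : a < b + c) (hbc : b < a + c) (hca : c < a + b) :
    a ^ 3 / (b + c - a) + b ^ 3 / (a + c - b) + c ^ 3 / (a + b - c)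
      + 7 * (a * b + b * c + c * a) ≥ 8 * (a ^ 2 + b ^ 2 + c ^ 2) := by
  have hu : 0 < b + c - a := by linarith
  have hv : 0 < a + c - b := by linarith
  have hw : 0 < a + b - c := by linarith
  have hP : 0 < (b + c - a) * ((a + c - b) * (a + b - c)) := by positivity
  have t1 : a ^ 3 / (b + c - a) * ((b + c - a) * ((a + c - b) * (a + b - c)))
      = a ^ 3 * ((a + c - b) * (a + b - c)) := by
    field_simp
  have t2 : b ^ 3 / (a + c - b) * ((b + c - a) * ((a + c - b) * (a + b - c)))
      = b ^ 3 * ((b + c - a) * (a + b - c)) := by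
    field_simp
  have t3 : c ^ 3 / (a + b - c) * ((b + c - a) * ((a + c - b) * (a + b - c)))
      = c ^ 3 * ((b + c - a) * (a + c - b)) := by
    field_simp
  have key : a ^ 3 * ((a + c - b) * (a + b - c)) + b ^ 3 * ((b + c - a) * (a + b - c))
      + c ^ 3 * ((b + c - a) * (a + c - b))
      + (7 * (a * b + b * c + c * a) - 8 * (a ^ 2 + b ^ 2 + c ^ 2))
        * ((b + c - a) * ((a + c - b) * (a + b - c))) ≥ 0 := by
    nlinarith [mul_nonneg (mul_nonneg hw.le (sq_nonneg (a - b))) (sq_nonneg (3*a + 3*b - 5*c)),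
      mul_nonneg (mul_nonneg hu.le (sq_nonneg (b - c))) (sq_nonneg (3*b + 3*c - 5*a)),
      mul_nonneg (mul_nonneg hv.le (sq_nonneg (c - a))) (sq_nonneg (3*c + 3*a - 5*b))]
  nlinarith [t1, t2, t3, key, hP]
end

section
/- If λ > (582√97 - 2054)/121 then the choice x1 = x2 = x3 = (5+√97)/72, x4 = (19-√97)/24 (positive reals summing to 1) satisfies 1/x1 + 1/x2 + 1/x3 + 1/x4 < λ / (1 + 16(λ-16)x1x2x3x4). -/
theorem stmt_9 (lam : ℝ) (hlam : (582 * Real.sqrt 97 - 2054) / 121 < lam)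
    (x1 x2 x3 x4 : ℝ)
    (h1 : x1 = (5 + Real.sqrt 97) / 72) (h2 : x2 = (5 + Real.sqrt 97) / 72)
    (h3 : x3 = (5 + Real.sqrt 97) / 72) (h4 : x4 = (19 - Real.sqrt 97) / 24) :
    0 < x1 ∧ 0 < x2 ∧ 0 < x3 ∧ 0 < x4 ∧ x1 + x2 + x3 + x4 = 1 ∧
      1 / x1 + 1 / x2 + 1 / x3 + 1 / x4 <
        lam / (1 + 16 * (lam - 16) * (x1 * x2 * x3 * x4)) := by
  subst h1 h2 h3 h4
  set s := Real.sqrt 97 with hsdef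
  have hs : s ^ 2 = 97 := Real.sq_sqrt (by norm_num)
  have hs9 : 9 < s := by
    have : (9:ℝ) = Real.sqrt 81 := by
      rw [show (81:ℝ) = 9^2 by norm_num, Real.sqrt_sq]; norm_num
    rw [this]; exact Real.sqrt_lt_sqrt (by norm_num) (by norm_num)
  have hs10 : s < 10 := by
    have : (10:ℝ) = Real.sqrt 100 := by
      rw [show (100:ℝ) = 10^2 by norm_num, Real.sqrt_sq]; norm_num
    rw [this]; exact Real.sqrt_lt_sqrt (by norm_num) (by norm_num)
  have ha : (0:ℝ) < (5 + s) / 72 := by linarith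
  have hb : (0:ℝ) < (19 - s) / 24 := by linarith
  have hlam16 : (16:ℝ) < lam := by nlinarith
  have ha' : (5 + s) / 72 ≠ 0 := ne_of_gt ha
  have hb' : (19 - s) / 24 ≠ 0 := ne_of_gt hb
  have e1 : 1 / ((5 + s) / 72) = s - 5 := by
    field_simp
    linear_combination -hs
  have e4 : 1 / ((19 - s) / 24) = (19 + s) / 11 := by
    rw [div_eq_div_iff (by linarith) (by norm_num)]
    linear_combination (1/24)*hs
  have eP : (5 + s) / 72 * ((5 + s) / 72) * ((5 + s) / 72) * ((19 - s) / 24)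
      = (211 * s + 1667) / 1119744 := by
    linear_combination ((-s^2 + 4*s + 113) / 8957952) * hs
  rw [e1, e4, eP]
  have hD : (0:ℝ) < 1 + 16 * (lam - 16) * ((211 * s + 1667) / 1119744) := by
    nlinarith
  refine ⟨ha, ha, ha, hb, by ring, ?_⟩
  rw [lt_div_iff₀ hD]
  have h601 : (0:ℝ) < 601 - 49 * s := by linarith
  have hkey : 0 < (lam - (582 * s - 2054) / 121) * (601 - 49 * s) :=
    mul_pos (by linarith) h601
  have hL : lam * s ^ 2 = 97 * lam := by rw [hs]; ring
  nlinarith [hkey, hs, hL]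
end

section
/- For arbitrary positive reals x1, …, xn (n ≥ 2), one has A^{n-1}·H ≥ G^n, where A = (Σ x_i)/n is the arithmetic mean, H = n/(Σ 1/x_i) the harmonic mean, and G = (Π x_i)^{1/n} the geometric mean. -/
open Finset

/-- AM–GM: the product of `n ≥ 1` positive reals is at most the `n`-th power of their
arithmetic mean. -/
lemma amgm_aux (n : ℕ) (hn : 1 ≤ n) (x : Fin n → ℝ) (hx : ∀ i, 0 < x i) :
    ∏ i, x i ≤ ((∑ i, x i) / n) ^ n := by
  have hn0 : (n : ℝ) ≠ 0 := Nat.cast_ne_zero.mpr (by omega)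
  have hP : 0 < ∏ i, x i := Finset.prod_pos fun i _ => hx i
  have h := Real.geom_mean_le_arith_mean_weighted Finset.univ (fun _ => (n : ℝ)⁻¹) x
    (fun i _ => by positivity)
    (by simp [Finset.sum_const, Finset.card_univ, mul_inv_cancel₀ hn0])
    (fun i _ => (hx i).le)
  rw [Real.finset_prod_rpow _ _ (fun i _ => (hx i).le)] at h
  have hsum : ∑ i : Fin n, (n : ℝ)⁻¹ * x i = (∑ i, x i) / n := by
    rw [← Finset.mul_sum]; ring
  rw [hsum] at h
  have h2 := pow_le_pow_left₀ (by positivity) h n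
  rwa [← Real.rpow_natCast ((∏ i, x i) ^ ((n : ℝ)⁻¹)) n, ← Real.rpow_mul hP.le,
    inv_mul_cancel₀ hn0, Real.rpow_one] at h2

/-- A Bernoulli-type inequality used in the induction step. -/
lemma bern_aux (m : ℕ) (S t : ℝ) (hS : 0 < S) (ht : 0 < t) :
    ((m : ℝ) + 2) ^ m * S ^ m * (S + ((m : ℝ) + 1) ^ 2 * t)
      ≤ ((m : ℝ) + 1) ^ (m + 1) * (S + t) ^ (m + 1) := by
  have hm0 : (0 : ℝ) ≤ (m : ℝ) := Nat.cast_nonneg m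
  have hD : 0 < ((m : ℝ) + 2) * S := by positivity
  set a : ℝ := (((m : ℝ) + 1) * t - S) / (((m : ℝ) + 2) * S) with ha
  have ha2 : (-2 : ℝ) ≤ a := by
    rw [ha, le_div_iff₀ hD]
    nlinarith
  have h := one_add_mul_le_pow ha2 (m + 1)
  have e1 : 1 + a = (((m : ℝ) + 1) * (S + t)) / (((m : ℝ) + 2) * S) := by
    rw [ha]; field_simp; ring
  have e2 : 1 + ((m + 1 : ℕ) : ℝ) * a
      = (S + ((m : ℝ) + 1) ^ 2 * t) / (((m : ℝ) + 2) * S) := by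
    rw [ha]; push_cast; field_simp; ring
  rw [e1, e2, div_pow] at h
  rw [div_le_div_iff₀ hD (by positivity)] at h
  have hcancel : (((m : ℝ) + 2) * S) ^ (m + 1)
      = (((m : ℝ) + 2) ^ m * S ^ m) * (((m : ℝ) + 2) * S) := by
    rw [pow_succ, mul_pow]
  rw [hcancel] at h
  have h'' : ((S + ((m : ℝ) + 1) ^ 2 * t) * (((m : ℝ) + 2) ^ m * S ^ m)) * (((m : ℝ) + 2) * S)
      ≤ (((m : ℝ) + 1) * (S + t)) ^ (m + 1) * (((m : ℝ) + 2) * S) := by linarith [h]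
  have h' := le_of_mul_le_mul_right h'' hD
  calc ((m : ℝ) + 2) ^ m * S ^ m * (S + ((m : ℝ) + 1) ^ 2 * t)
      = (S + ((m : ℝ) + 1) ^ 2 * t) * (((m : ℝ) + 2) ^ m * S ^ m) := by ring
    _ ≤ (((m : ℝ) + 1) * (S + t)) ^ (m + 1) := h'
    _ = ((m : ℝ) + 1) ^ (m + 1) * (S + t) ^ (m + 1) := by rw [mul_pow]

/-- Key inequality: `n^(n-1) * ∏ x * ∑ 1/x ≤ n * (∑ x)^(n-1)`. -/
lemma key_aux : ∀ n : ℕ, 1 ≤ n → ∀ x : Fin n → ℝ, (∀ i, 0 < x i) →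
    (n : ℝ) ^ (n - 1) * (∏ i, x i) * (∑ i, 1 / x i) ≤ n * (∑ i, x i) ^ (n - 1) := by
  intro n hn
  induction n, hn using Nat.le_induction with
  | base =>
    intro x hx
    simp only [Fin.sum_univ_one, Fin.prod_univ_one, Nat.sub_self, pow_zero, Nat.cast_one,
      one_mul, mul_one]
    rw [one_div, mul_inv_cancel₀ (hx 0).ne']
  | succ n hn1 IH =>
    intro x hx
    obtain ⟨m, rfl⟩ : ∃ m, n = m + 1 := ⟨n - 1, by omega⟩
    set y : Fin (m + 1) → ℝ := fun i => x i.castSucc with hy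
    set t : ℝ := x (Fin.last (m + 1)) with htdef
    have hxy : ∀ i, 0 < y i := fun i => hx _
    have ht : 0 < t := hx _
    set S : ℝ := ∑ i, y i with hSdef
    set P : ℝ := ∏ i, y i with hPdef
    set T : ℝ := ∑ i, 1 / y i with hTdef
    have hS : 0 < S := Finset.sum_pos (fun i _ => hxy i) Finset.univ_nonempty
    have hP : 0 < P := Finset.prod_pos fun i _ => hxy i
    have hsum : ∑ i, x i = S + t := by rw [hSdef, Fin.sum_univ_castSucc]
    have hprod : ∏ i, x i = P * t := by rw [hPdef, Fin.prod_univ_castSucc]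
    have hsuminv : ∑ i : Fin (m + 1 + 1), 1 / x i = T + 1 / t := by
      rw [hTdef, Fin.sum_univ_castSucc (f := fun i => 1 / x i)]
    rw [hsum, hprod, hsuminv]
    have hmsimp : m + 1 + 1 - 1 = m + 1 := by omega
    rw [hmsimp]
    -- IH applied to y
    have h1 : ((m : ℝ) + 1) ^ m * (P * T) ≤ ((m : ℝ) + 1) * S ^ m := by
      have := IH y hxy
      rw [Nat.add_sub_cancel] at this
      push_cast at this
      linarith [this]
    -- AM-GM applied to y
    have h2 : P ≤ (S / ((m : ℝ) + 1)) ^ (m + 1) := by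
      have := amgm_aux (m + 1) (by omega) y hxy
      push_cast at this
      exact this
    have h3 := bern_aux m S t hS ht
    set N : ℝ := (m : ℝ) + 1 with hNdef
    have hN : 0 < N := by positivity
    push_cast
    -- reduce to the inequality multiplied by N^(m+1)
    rw [← mul_le_mul_iff_right₀ (pow_pos hN (m + 1))]
    have claimA : N ^ (m + 1) * (t * (P * T) + P) ≤ S ^ m * (S + N ^ 2 * t) := by
      have hA1 : N ^ (m + 1) * (t * (P * T)) ≤ N ^ 2 * t * S ^ m := by
        have := mul_le_mul_of_nonneg_left h1 (mul_nonneg (le_of_lt hN) ht.le)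
        calc N ^ (m + 1) * (t * (P * T)) = (N * t) * (N ^ m * (P * T)) := by ring
          _ ≤ (N * t) * (N * S ^ m) := this
          _ = N ^ 2 * t * S ^ m := by ring
      have hA2 : N ^ (m + 1) * P ≤ S ^ m * S := by
        have := mul_le_mul_of_nonneg_left h2 (le_of_lt (pow_pos hN (m + 1)))
        calc N ^ (m + 1) * P ≤ N ^ (m + 1) * (S / N) ^ (m + 1) := this
          _ = S ^ (m + 1) := by rw [div_pow, mul_div_cancel₀]; positivity
          _ = S ^ m * S := by rw [pow_succ]
      calc N ^ (m + 1) * (t * (P * T) + P)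
          = N ^ (m + 1) * (t * (P * T)) + N ^ (m + 1) * P := by ring
        _ ≤ N ^ 2 * t * S ^ m + S ^ m * S := add_le_add hA1 hA2
        _ = S ^ m * (S + N ^ 2 * t) := by ring
    have hM2 : (0 : ℝ) < (m : ℝ) + 2 := by positivity
    calc N ^ (m + 1) * (((m : ℝ) + 1 + 1) ^ (m + 1) * (P * t) * (T + 1 / t))
        = ((m : ℝ) + 2) ^ (m + 1) * (N ^ (m + 1) * (t * (P * T) + P)) := by
          field_simp
          ring
      _ ≤ ((m : ℝ) + 2) ^ (m + 1) * (S ^ m * (S + N ^ 2 * t)) :=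
          mul_le_mul_of_nonneg_left claimA (by positivity)
      _ = ((m : ℝ) + 2) * (((m : ℝ) + 2) ^ m * S ^ m * (S + N ^ 2 * t)) := by
          rw [pow_succ]; ring
      _ ≤ ((m : ℝ) + 2) * (N ^ (m + 1) * (S + t) ^ (m + 1)) :=
          mul_le_mul_of_nonneg_left h3 hM2.le
      _ = N ^ (m + 1) * (((m : ℝ) + 1 + 1) * (S + t) ^ (m + 1)) := by ring

theorem stmt_11 (n : ℕ) (hn : 2 ≤ n) (x : Fin n → ℝ) (hx : ∀ i, 0 < x i) :
    ((∑ i, x i) / n) ^ (n - 1) * ((n : ℝ) / ∑ i, 1 / x i)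
      ≥ ((∏ i, x i) ^ ((1 : ℝ) / n)) ^ n := by
  have hn0 : (n : ℝ) ≠ 0 := Nat.cast_ne_zero.mpr (by omega)
  have hne : (Finset.univ : Finset (Fin n)).Nonempty := by
    simp [Finset.univ_nonempty_iff]
    exact Fin.pos_iff_nonempty.mp (by omega)
  have hP : 0 < ∏ i, x i := Finset.prod_pos fun i _ => hx i
  have hT : 0 < ∑ i, 1 / x i := Finset.sum_pos (fun i _ => one_div_pos.mpr (hx i)) hne
  have hRP : ((∏ i, x i) ^ ((1 : ℝ) / n)) ^ n = ∏ i, x i := by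
    rw [← Real.rpow_natCast ((∏ i, x i) ^ ((1 : ℝ) / n)) n, ← Real.rpow_mul hP.le,
      one_div, inv_mul_cancel₀ hn0, Real.rpow_one]
  have hkey := key_aux n (by omega) x hx
  rw [ge_iff_le, hRP, div_pow, div_mul_div_comm, le_div_iff₀ (by positivity)]
  nlinarith [hkey]
end

section
/- For every real l < n-1 (with n ≥ 2), the inequality A^l·H ≥ G^{l+1} fails for some positive reals x1,…,xn: taking x1 = ⋯ = x_{n-1} = 1 and xn = x, the ratio A^l·H / G^{l+1} tends to 0 as x → 0+. -/
theorem stmt_12 (n : ℕ) (hn : 2 ≤ n) (l : ℝ) (hl : l < (n : ℝ) - 1) :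
    Filter.Tendsto
      (fun x : ℝ =>
        ((((n : ℝ) - 1) + x) / n) ^ l * ((n : ℝ) / (((n : ℝ) - 1) + 1 / x)) /
          (x ^ ((1 : ℝ) / n)) ^ (l + 1))
      (nhdsWithin 0 (Set.Ioi 0)) (nhds 0) := by
  have hn1 : (1:ℝ) ≤ (n:ℝ) - 1 := by
    have : (2:ℝ) ≤ (n:ℝ) := by exact_mod_cast hn
    linarith
  have hnpos : (0:ℝ) < n := by linarith
  set p : ℝ := 1 - (l+1)/n with hp
  have hppos : 0 < p := by
    rw [hp, sub_pos, div_lt_one hnpos]; linarith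
  have heq : ∀ x ∈ Set.Ioi (0:ℝ),
      (((((n : ℝ) - 1) + x) / n) ^ l * ((n : ℝ) / (((n : ℝ) - 1) + 1 / x)) /
          (x ^ ((1 : ℝ) / n)) ^ (l + 1))
        = ((((n:ℝ)-1+x)/n)^l * ((n:ℝ)/(((n:ℝ)-1)*x+1))) * x ^ p := by
    intro x hx
    have hx0 : (0:ℝ) < x := hx
    have h1 : (x ^ ((1:ℝ)/n)) ^ (l+1) = x ^ ((l+1)/n) := by
      rw [← Real.rpow_mul hx0.le]
      congr 1
      field_simp
      try ring
    have hden1 : ((n:ℝ)-1) + 1/x ≠ 0 := by positivity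
    have hden2 : ((n:ℝ)-1)*x + 1 ≠ 0 := by positivity
    have hrp : (0:ℝ) < x ^ ((l+1)/n) := Real.rpow_pos_of_pos hx0 _
    have h2 : x ^ p = x / x ^ ((l+1)/n) := by
      rw [hp, Real.rpow_sub hx0, Real.rpow_one]
    rw [h1, h2]
    have h3 : (n:ℝ) / (((n:ℝ)-1) + 1/x) = (n:ℝ) * x / (((n:ℝ)-1)*x + 1) := by
      field_simp
    rw [h3]
    field_simp
  apply Filter.Tendsto.congr' (Filter.eventuallyEq_of_mem self_mem_nhdsWithin
    (fun x hx => (heq x hx).symm))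
  have h4 : Filter.Tendsto (fun x : ℝ => ((((n:ℝ)-1+x)/n)^l * ((n:ℝ)/(((n:ℝ)-1)*x+1))))
      (nhdsWithin 0 (Set.Ioi 0)) (nhds ((((n:ℝ)-1)/n)^l * ((n:ℝ)/1))) := by
    apply Filter.Tendsto.mono_left _ nhdsWithin_le_nhds
    apply Filter.Tendsto.mul
    · apply Filter.Tendsto.rpow_const
      · have : Filter.Tendsto (fun x : ℝ => ((n:ℝ)-1+x)/n) (nhds 0) (nhds (((n:ℝ)-1+0)/n)) :=
          Continuous.tendsto (by fun_prop) 0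
        simpa using this
      · left; positivity
    · have : Filter.Tendsto (fun x : ℝ => (n:ℝ)/(((n:ℝ)-1)*x+1)) (nhds 0)
          (nhds ((n:ℝ)/(((n:ℝ)-1)*0+1))) := by
        apply Filter.Tendsto.div tendsto_const_nhds (Continuous.tendsto (by fun_prop) 0)
        norm_num
      simpa using this
  have h5 : Filter.Tendsto (fun x : ℝ => x ^ p) (nhdsWithin 0 (Set.Ioi 0)) (nhds 0) := by
    have hc := (Real.continuousAt_rpow_const 0 p (Or.inr hppos.le)).tendsto
    rw [Real.zero_rpow hppos.ne'] at hc
    exact hc.mono_left nhdsWithin_le_nhds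
  simpa using h4.mul h5
end

section
/- For every natural number n ≥ 3 and real 0 < x ≤ 1/n, with x1 = x and x2 = ⋯ = xn = (1-x)/(n-1), one has 1/x + (n-1)^2/(1-x) ≤ (n-1)^{n-1} / (n^{n-2}·x·(1-x)^{n-1}), with equality iff x = 1/n. -/
lemma key_aux_s13 (m : ℕ) (hm : 1 ≤ m) (a b : ℝ) (ha : 0 ≤ a) (hb : 0 ≤ b) :
    (a - b) ^ 2 * b ^ (m - 1) ≤ b ^ (m + 1) - (((m : ℝ) + 1) * b - (m : ℝ) * a) * a ^ m := by
  induction m, hm using Nat.le_induction with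
  | base =>
    norm_num
    nlinarith [sq_nonneg (a - b)]
  | succ m hm ih =>
    have hmm : m + 1 - 1 = m := rfl
    rw [hmm]
    push_cast
    have step : b ^ (m + 1 + 1) - (((m : ℝ) + 1 + 1) * b - ((m : ℝ) + 1) * a) * a ^ (m + 1)
        = b * (b ^ (m + 1) - (((m : ℝ) + 1) * b - (m : ℝ) * a) * a ^ m)
          + ((m : ℝ) + 1) * a ^ m * (a - b) ^ 2 := by
      rw [pow_succ a m, pow_succ b (m + 1)]
      ring
    rw [step]
    have hbm : b ^ (m - 1) * b = b ^ m := by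
      rw [← pow_succ]
      congr 1
      omega
    have h1 : (a - b) ^ 2 * b ^ m = b * ((a - b) ^ 2 * b ^ (m - 1)) := by
      rw [← hbm]; ring
    rw [h1]
    have h2 : b * ((a - b) ^ 2 * b ^ (m - 1))
        ≤ b * (b ^ (m + 1) - (((m : ℝ) + 1) * b - (m : ℝ) * a) * a ^ m) :=
      mul_le_mul_of_nonneg_left ih hb
    have h3 : 0 ≤ ((m : ℝ) + 1) * a ^ m * (a - b) ^ 2 := by positivity
    linarith

theorem stmt_13 (n : ℕ) (hn : 3 ≤ n) (x : ℝ) (hx : 0 < x) (hx1 : x ≤ 1 / n) :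
    1 / x + ((n : ℝ) - 1) ^ 2 / (1 - x) ≤
        ((n : ℝ) - 1) ^ (n - 1) / ((n : ℝ) ^ (n - 2) * x * (1 - x) ^ (n - 1)) ∧
      (1 / x + ((n : ℝ) - 1) ^ 2 / (1 - x) =
          ((n : ℝ) - 1) ^ (n - 1) / ((n : ℝ) ^ (n - 2) * x * (1 - x) ^ (n - 1)) ↔
        x = 1 / n) := by
  have hn3 : (3 : ℝ) ≤ (n : ℝ) := by exact_mod_cast hn
  set N := (n : ℝ) with hNdef
  have hNpos : 0 < N := by linarith
  have hm1 : 1 ≤ n - 2 := by omega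
  have h1 : n - 1 = (n - 2) + 1 := by omega
  set m := n - 2 with hmdef
  rw [h1]
  have hmcast : (m : ℝ) = N - 2 := by
    rw [hmdef, hNdef]
    push_cast [Nat.cast_sub (by omega : 2 ≤ n)]
    ring
  -- basic bounds
  have hxN : x * N ≤ 1 := by rwa [le_div_iff₀ hNpos] at hx1
  have hxlt1 : x < 1 := by nlinarith
  have h1x : 0 < 1 - x := by linarith
  have hb : (0 : ℝ) < N - 1 := by linarith
  have ha : (0 : ℝ) ≤ N * (1 - x) := by positivity
  have hkey := key_aux_s13 m hm1 (N * (1 - x)) (N - 1) ha hb.le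
  rw [hmcast] at hkey
  have hnum_eq : (N - 1) ^ (m + 1) - ((N - 2 + 1) * (N - 1) - (N - 2) * (N * (1 - x))) * (N * (1 - x)) ^ m
      = (N - 1) ^ (m + 1) - (1 + N * (N - 2) * x) * (N ^ m * (1 - x) ^ m) := by
    rw [mul_pow]
    ring
  have hab_eq : (N * (1 - x) - (N - 1)) ^ 2 = (1 - N * x) ^ 2 := by ring
  rw [hnum_eq, hab_eq] at hkey
  have hD : 0 < N ^ m * x * (1 - x) ^ (m + 1) := by positivity
  have hident : (N - 1) ^ (m + 1) / (N ^ m * x * (1 - x) ^ (m + 1)) - (1 / x + (N - 1) ^ 2 / (1 - x))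
      = ((N - 1) ^ (m + 1) - (1 + N * (N - 2) * x) * (N ^ m * (1 - x) ^ m))
        / (N ^ m * x * (1 - x) ^ (m + 1)) := by
    rw [pow_succ (1 - x) m]
    field_simp
    ring
  have hnum_nonneg : 0 ≤ (N - 1) ^ (m + 1) - (1 + N * (N - 2) * x) * (N ^ m * (1 - x) ^ m) :=
    le_trans (by positivity) hkey
  have hineq : 1 / x + (N - 1) ^ 2 / (1 - x)
      ≤ (N - 1) ^ (m + 1) / (N ^ m * x * (1 - x) ^ (m + 1)) := by
    have := div_nonneg hnum_nonneg hD.le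
    linarith
  refine ⟨hineq, ?_, ?_⟩
  · intro heq
    by_contra hne
    have hlt : x < 1 / N := lt_of_le_of_ne hx1 hne
    have hNx : 0 < 1 - N * x := by
      rw [lt_div_iff₀ hNpos] at hlt
      nlinarith
    have hpos : 0 < (1 - N * x) ^ 2 * (N - 1) ^ (m - 1) := by positivity
    have hnum_pos : 0 < (N - 1) ^ (m + 1) - (1 + N * (N - 2) * x) * (N ^ m * (1 - x) ^ m) :=
      lt_of_lt_of_le hpos hkey
    have : 0 < ((N - 1) ^ (m + 1) - (1 + N * (N - 2) * x) * (N ^ m * (1 - x) ^ m))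
        / (N ^ m * x * (1 - x) ^ (m + 1)) := div_pos hnum_pos hD
    linarith
  · intro hxe
    subst hxe
    have hnum0 : (N - 1) ^ (m + 1) - (1 + N * (N - 2) * (1 / N)) * (N ^ m * (1 - 1 / N) ^ m) = 0 := by
      have h1N : (1 : ℝ) - 1 / N = (N - 1) / N := by field_simp
      rw [h1N, div_pow, pow_succ]
      field_simp
      ring
    have := hident
    rw [hnum0, zero_div] at this
    linarith
end

section
/- Let n ≥ 3 and define p_n(t) = ((n-1) - (n-2)t)·Σ_{k=1}^{n-1} k·t^{k-1}. Then its derivative p_n'(t) has exactly one zero in the interval (0,1); moreover p_n'(0) = n > 0 and p_n'(1) = -n(n-1)(n-2)/6 < 0. -/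
open Finset

private lemma stmt15_aux1 (M : ℕ) : ∑ k ∈ Finset.range M, ((k:ℝ)+1) = M*(M+1)/2 := by
  induction M with
  | zero => simp
  | succ M ih => rw [Finset.sum_range_succ, ih]; push_cast; ring

private lemma stmt15_aux2 (M : ℕ) :
    ∑ k ∈ Finset.range M, ((k:ℝ)+2)*((k:ℝ)+1) = M*(M+1)*(M+2)/3 := by
  induction M with
  | zero => simp
  | succ M ih => rw [Finset.sum_range_succ, ih]; push_cast; ring

theorem stmt_15 (n : ℕ) (hn : 3 ≤ n)
    (p : ℝ → ℝ)
    (hp : p = fun t => (((n : ℝ) - 1) - ((n : ℝ) - 2) * t) *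
      ∑ k ∈ Finset.range (n - 1), ((k : ℝ) + 1) * t ^ k) :
    (∃! t : ℝ, t ∈ Set.Ioo (0 : ℝ) 1 ∧ deriv p t = 0) ∧
      deriv p 0 = n ∧ (0 : ℝ) < n ∧
      deriv p 1 = -((n : ℝ) * ((n : ℝ) - 1) * ((n : ℝ) - 2)) / 6 ∧
      -((n : ℝ) * ((n : ℝ) - 1) * ((n : ℝ) - 2)) / 6 < 0 := by
  obtain ⟨m, rfl⟩ : ∃ m, n = m + 3 := ⟨n - 3, by omega⟩
  have h21 : m + 3 - 1 = m + 2 := by omega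
  rw [h21] at hp
  -- derivative in raw product-rule form
  have hderiv : ∀ t : ℝ, HasDerivAt p
      (-(((m+3:ℕ):ℝ) - 2) * (∑ k ∈ Finset.range (m+2), ((k:ℝ)+1) * t^k)
        + ((((m+3:ℕ):ℝ) - 1) - (((m+3:ℕ):ℝ) - 2) * t) *
          (∑ k ∈ Finset.range (m+2), ((k:ℝ)+1) * ((k:ℝ) * t^(k-1)))) t := by
    intro t
    rw [hp]
    have hA : HasDerivAt (fun t : ℝ => (((m+3:ℕ):ℝ) - 1) - (((m+3:ℕ):ℝ) - 2) * t)
        (-(((m+3:ℕ):ℝ) - 2)) t := by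
      simpa using ((hasDerivAt_const t (((m+3:ℕ):ℝ) - 1)).fun_sub
        ((hasDerivAt_id t).const_mul (((m+3:ℕ):ℝ) - 2)))
    have hS : HasDerivAt (fun t : ℝ => ∑ k ∈ Finset.range (m+2), ((k:ℝ)+1) * t^k)
        (∑ k ∈ Finset.range (m+2), ((k:ℝ)+1) * ((k:ℝ) * t^(k-1))) t :=
      HasDerivAt.fun_sum fun k _ => (hasDerivAt_pow k t).const_mul _
    simpa using hA.fun_mul hS
  -- coefficient form of the derivative
  have hE : ∀ t : ℝ, deriv p t =
      (∑ k ∈ Finset.range (m+1), (((k:ℝ)+1)*((m:ℝ)+3+(k:ℝ))) * t^k)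
        - ((m:ℝ)+1)*((m:ℝ)+2)^2 * t^(m+1) := by
    intro t
    rw [(hderiv t).deriv]
    push_cast
    have e1 : (∑ k ∈ Finset.range (m+2), ((k:ℝ)+1) * ((k:ℝ) * t^(k-1)))
        = ∑ k ∈ Finset.range (m+1), (((k:ℝ)+2)*((k:ℝ)+1)) * t^k := by
      rw [Finset.sum_range_succ']
      simp only [Nat.add_sub_cancel, Nat.cast_zero, zero_mul, mul_zero, add_zero]
      exact Finset.sum_congr rfl fun k _ => by push_cast; ring
    rw [e1]
    have e2' : (∑ k ∈ Finset.range (m+2), (((k:ℝ)+1)*(k:ℝ)) * t^k)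
        = t * (∑ k ∈ Finset.range (m+1), (((k:ℝ)+2)*((k:ℝ)+1)) * t^k) := by
      rw [Finset.sum_range_succ', Finset.mul_sum]
      simp only [Nat.cast_zero, mul_zero, zero_mul, add_zero]
      exact Finset.sum_congr rfl fun k _ => by push_cast; ring
    have e3 : (∑ k ∈ Finset.range (m+2), ((k:ℝ)+1) * t^k)
        + (∑ k ∈ Finset.range (m+2), (((k:ℝ)+1)*(k:ℝ)) * t^k)
        = ∑ k ∈ Finset.range (m+2), (((k:ℝ)+1)^2) * t^k := by
      rw [← Finset.sum_add_distrib]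
      exact Finset.sum_congr rfl fun k _ => by ring
    have e4 : (∑ k ∈ Finset.range (m+2), (((k:ℝ)+1)^2) * t^k)
        = (∑ k ∈ Finset.range (m+1), (((k:ℝ)+1)^2) * t^k) + ((m:ℝ)+2)^2 * t^(m+1) := by
      rw [Finset.sum_range_succ]; push_cast; ring
    have e5 : ((m:ℝ)+2) * (∑ k ∈ Finset.range (m+1), (((k:ℝ)+2)*((k:ℝ)+1)) * t^k)
        - ((m:ℝ)+1) * (∑ k ∈ Finset.range (m+1), (((k:ℝ)+1)^2) * t^k)
        = ∑ k ∈ Finset.range (m+1), (((k:ℝ)+1)*((m:ℝ)+3+(k:ℝ))) * t^k := by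
      rw [Finset.mul_sum, Finset.mul_sum, ← Finset.sum_sub_distrib]
      exact Finset.sum_congr rfl fun k _ => by ring
    linear_combination ((m:ℝ)+1) * e2' + (-((m:ℝ)+1)) * e3 + (-((m:ℝ)+1)) * e4 + e5
  -- value at 0
  have h0 : deriv p 0 = ((m:ℝ)+3) := by
    rw [hE 0, Finset.sum_range_succ']
    simp [pow_succ]
  -- value at 1
  have h1 : deriv p 1 = -(((m:ℝ)+3) * (((m:ℝ)+3) - 1) * (((m:ℝ)+3) - 2)) / 6 := by
    rw [hE 1]
    simp only [one_pow, mul_one]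
    have hs : ∑ k ∈ Finset.range (m+1), (((k:ℝ)+1)*((m:ℝ)+3+(k:ℝ)))
        = (∑ k ∈ Finset.range (m+1), ((k:ℝ)+2)*((k:ℝ)+1))
          + ((m:ℝ)+1) * (∑ k ∈ Finset.range (m+1), ((k:ℝ)+1)) := by
      rw [Finset.mul_sum, ← Finset.sum_add_distrib]
      exact Finset.sum_congr rfl fun k _ => by ring
    rw [hs, stmt15_aux2, stmt15_aux1]
    push_cast; ring
  have hgt : (0:ℝ) < deriv p 0 := by rw [h0]; positivity
  have hprod : (0:ℝ) < ((m:ℝ)+3) * (((m:ℝ)+3) - 1) * (((m:ℝ)+3) - 2) := by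
    have hm : (0:ℝ) ≤ (m:ℝ) := Nat.cast_nonneg m
    have hA : (0:ℝ) < (m:ℝ)+3 := by positivity
    have hB : (0:ℝ) < (m:ℝ)+3-1 := by linarith
    have hC : (0:ℝ) < (m:ℝ)+3-2 := by linarith
    exact mul_pos (mul_pos hA hB) hC
  have hlt : deriv p 1 < 0 := by
    rw [h1]
    linarith
  -- roots in (0,1) satisfy a rigid equation
  have key : ∀ t ∈ Set.Ioo (0:ℝ) 1, deriv p t = 0 →
      (∑ k ∈ Finset.range (m+1), (((k:ℝ)+1)*((m:ℝ)+3+(k:ℝ))) * (1/t)^(m+1-k))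
        = ((m:ℝ)+1)*((m:ℝ)+2)^2 := by
    intro t ht h0t
    have htpos : 0 < t := ht.1
    have htne : t ≠ 0 := ne_of_gt htpos
    have hsum : (∑ k ∈ Finset.range (m+1), (((k:ℝ)+1)*((m:ℝ)+3+(k:ℝ))) * t^k)
        = ((m:ℝ)+1)*((m:ℝ)+2)^2 * t^(m+1) := by
      have h := (hE t).symm.trans h0t
      linarith
    calc (∑ k ∈ Finset.range (m+1), (((k:ℝ)+1)*((m:ℝ)+3+(k:ℝ))) * (1/t)^(m+1-k))
        = ∑ k ∈ Finset.range (m+1),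
            ((((k:ℝ)+1)*((m:ℝ)+3+(k:ℝ))) * t^k) * (1/t)^(m+1) := by
          refine Finset.sum_congr rfl fun k hk => ?_
          have hk' : k ≤ m := Nat.lt_succ_iff.mp (Finset.mem_range.mp hk)
          have h : (1/t)^(m+1) = (1/t)^k * (1/t)^(m+1-k) := by
            rw [← pow_add]; congr 1; omega
          have h2 : (1/t)^(m+1-k) = t^k * (1/t)^(m+1) := by
            rw [h, ← mul_assoc, ← mul_pow]
            field_simp
            simp
          rw [h2]; ring
      _ = (∑ k ∈ Finset.range (m+1), (((k:ℝ)+1)*((m:ℝ)+3+(k:ℝ))) * t^k) * (1/t)^(m+1) := by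
          rw [← Finset.sum_mul]
      _ = ((m:ℝ)+1)*((m:ℝ)+2)^2 * (t^(m+1) * (1/t)^(m+1)) := by rw [hsum]; ring
      _ = ((m:ℝ)+1)*((m:ℝ)+2)^2 := by
          rw [← mul_pow]
          field_simp
          simp
  -- strict monotonicity of the auxiliary sum
  have hmono : ∀ u v : ℝ, 0 < u → u < v →
      (∑ k ∈ Finset.range (m+1), (((k:ℝ)+1)*((m:ℝ)+3+(k:ℝ))) * u^(m+1-k))
        < ∑ k ∈ Finset.range (m+1), (((k:ℝ)+1)*((m:ℝ)+3+(k:ℝ))) * v^(m+1-k) := by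
    intro u v hu huv
    apply Finset.sum_lt_sum_of_nonempty (by simp)
    intro k hk
    have hk' : k < m + 1 := Finset.mem_range.mp hk
    have hexp : m + 1 - k ≠ 0 := by omega
    have hc : (0:ℝ) < ((k:ℝ)+1)*((m:ℝ)+3+(k:ℝ)) := by positivity
    exact mul_lt_mul_of_pos_left (pow_lt_pow_left₀ huv hu.le hexp) hc
  -- existence
  have hcont : ContinuousOn (deriv p) (Set.Icc (0:ℝ) 1) := by
    have hfe : deriv p = fun t =>
        (∑ k ∈ Finset.range (m+1), (((k:ℝ)+1)*((m:ℝ)+3+(k:ℝ))) * t^k)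
          - ((m:ℝ)+1)*((m:ℝ)+2)^2 * t^(m+1) := funext hE
    rw [hfe]
    exact ((continuous_finset_sum _ fun k _ =>
      continuous_const.mul (continuous_pow k)).sub
      (continuous_const.mul (continuous_pow (m+1)))).continuousOn
  obtain ⟨x, hx, hx0⟩ := intermediate_value_Ioo' (by norm_num : (0:ℝ) ≤ 1) hcont ⟨hlt, hgt⟩
  refine ⟨⟨x, ⟨hx, hx0⟩, ?_⟩, ?_, ?_, ?_, ?_⟩
  · rintro b ⟨hb, hb0⟩
    have kb := key b hb hb0
    have kx := key x hx hx0
    by_contra hne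
    rcases lt_or_gt_of_ne hne with h | h
    · have hinv : 1/x < 1/b := one_div_lt_one_div_of_lt hb.1 h
      have := hmono (1/x) (1/b) (one_div_pos.mpr hx.1) hinv
      rw [kx, kb] at this
      exact lt_irrefl _ this
    · have hinv : 1/b < 1/x := one_div_lt_one_div_of_lt hx.1 h
      have := hmono (1/b) (1/x) (one_div_pos.mpr hb.1) hinv
      rw [kx, kb] at this
      exact lt_irrefl _ this
  · rw [h0]; push_cast; ring
  · push_cast; positivity
  · rw [h1]; push_cast; ring
  · push_cast
    linarith
end

section
/- For every natural n ≥ 3 and all positive reals x1, …, xn with Σ x_i = 1, the inequality Σ 1/x_i ≥ λ / (1 + n^{n-2}(λ - n^2)·Π x_i) holds with λ = n^3/(n-1). -/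
theorem stmt_17 (n : ℕ) (hn : 3 ≤ n) (x : Fin n → ℝ) (hx : ∀ i, 0 < x i)
    (hsum : ∑ i, x i = 1) :
    (∑ i, 1 / x i) ≥
      ((n : ℝ) ^ 3 / ((n : ℝ) - 1)) /
        (1 + (n : ℝ) ^ (n - 2) * ((n : ℝ) ^ 3 / ((n : ℝ) - 1) - (n : ℝ) ^ 2) * ∏ i, x i) := by
  have hn' : (3:ℝ) ≤ (n:ℝ) := by exact_mod_cast hn
  have hn0 : (0:ℝ) < n := by linarith
  have hn1 : (0:ℝ) < (n:ℝ) - 1 := by linarith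
  set P : ℝ := ∏ i, x i with hP
  have hPpos : 0 < P := Finset.prod_pos (fun i _ => hx i)
  set s : ℝ := P ^ ((n:ℝ)⁻¹) with hsdef
  have hspos : 0 < s := Real.rpow_pos_of_pos hPpos _
  have hsn : s ^ n = P := by
    rw [hsdef, ← Real.rpow_natCast (P ^ ((n:ℝ)⁻¹)) n, ← Real.rpow_mul hPpos.le,
      inv_mul_cancel₀ hn0.ne', Real.rpow_one]
  have hw : ∑ _i : Fin n, (n:ℝ)⁻¹ = 1 := by
    simp [Finset.sum_const, Finset.card_univ, mul_inv_cancel₀ hn0.ne']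
  -- AM-GM for x : s ≤ 1/n
  have h1 : s ≤ (n:ℝ)⁻¹ := by
    have := Real.geom_mean_le_arith_mean_weighted Finset.univ (fun _ => (n:ℝ)⁻¹) x
      (fun i _ => by positivity) hw (fun i _ => (hx i).le)
    rwa [Real.finset_prod_rpow _ _ (fun i _ => (hx i).le), ← Finset.mul_sum, hsum,
      mul_one] at this
  -- AM-GM for 1/x : n/s ≤ ∑ 1/x
  have h2 : (n:ℝ)/s ≤ ∑ i, 1 / x i := by
    have := Real.geom_mean_le_arith_mean_weighted Finset.univ (fun _ => (n:ℝ)⁻¹)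
      (fun i => (x i)⁻¹) (fun i _ => by positivity) hw
      (fun i _ => (inv_pos.mpr (hx i)).le)
    rw [Real.finset_prod_rpow _ _ (fun i _ => (inv_pos.mpr (hx i)).le), Finset.prod_inv_distrib,
      ← hP, Real.inv_rpow hPpos.le, ← hsdef, ← Finset.mul_sum] at this
    have hs' : s⁻¹ ≤ (n:ℝ)⁻¹ * ∑ i, (x i)⁻¹ := this
    simp only [one_div]
    calc (n:ℝ)/s = (n:ℝ) * s⁻¹ := by rw [div_eq_mul_inv]
      _ ≤ (n:ℝ) * ((n:ℝ)⁻¹ * ∑ i, (x i)⁻¹) := by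
          exact mul_le_mul_of_nonneg_left hs' hn0.le
      _ = ∑ i, (x i)⁻¹ := by field_simp
  -- Bernoulli
  have hB : 1 + (n:ℝ) * ((n:ℝ)*s - 1) ≤ ((n:ℝ)*s) ^ n := by
    have := one_add_mul_le_pow (a := (n:ℝ)*s - 1) (by nlinarith) n
    simpa using this
  have hNP : ((n:ℝ)*s) ^ n = (n:ℝ)^n * P := by rw [mul_pow, hsn]
  have key : (n:ℝ)^2 * s ≤ ((n:ℝ) - 1) + (n:ℝ)^n * P := by
    rw [← hNP]; nlinarith [hB]
  have hAn : (n:ℝ)^(n-2) * (n:ℝ)^2 = (n:ℝ)^n := by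
    rw [← pow_add, Nat.sub_add_cancel (by omega)]
  have hc : (n:ℝ)^3/((n:ℝ)-1) - (n:ℝ)^2 = (n:ℝ)^2/((n:ℝ)-1) := by
    field_simp; ring
  have hc2 : (n:ℝ)^(n-2) * ((n:ℝ)^2/((n:ℝ)-1)) = (n:ℝ)^n/((n:ℝ)-1) := by
    rw [mul_div_assoc', hAn]
  have hD : 0 < 1 + (n:ℝ)^n/((n:ℝ)-1) * P := by positivity
  rw [ge_iff_le, hc, hc2, div_le_iff₀ hD]
  have step1 : (n:ℝ)^3/((n:ℝ)-1) ≤ ((n:ℝ)/s) * (1 + (n:ℝ)^n/((n:ℝ)-1) * P) := by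
    rw [div_mul_eq_mul_div, div_le_div_iff₀ hn1 hspos]
    have hnn : (n:ℝ)^n/((n:ℝ)-1) * ((n:ℝ)-1) = (n:ℝ)^n := div_mul_cancel₀ _ hn1.ne'
    have expand : (n:ℝ) * (1 + (n:ℝ)^n/((n:ℝ)-1) * P) * ((n:ℝ)-1)
        = (n:ℝ) * (((n:ℝ)-1) + (n:ℝ)^n * P) := by
      field_simp
    rw [expand]
    nlinarith [mul_le_mul_of_nonneg_left key hn0.le]
  calc (n:ℝ)^3/((n:ℝ)-1) ≤ ((n:ℝ)/s) * (1 + (n:ℝ)^n/((n:ℝ)-1) * P) := step1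
    _ ≤ (∑ i, 1 / x i) * (1 + (n:ℝ)^n/((n:ℝ)-1) * P) :=
        mul_le_mul_of_nonneg_right h2 hD.le
end

section
/- For every natural n ≥ 3 and every real λ > n^3/(n-2), there exist positive reals x1, …, xn with Σ x_i = 1 such that Σ 1/x_i < λ / (1 + n^{n-2}(λ - n^2)·Π x_i); i.e. the best constant λ_n in this inequality satisfies λ_n ≤ n^3/(n-2). -/
noncomputable def Q (k : ℕ) (lam M c x : ℝ) : ℝ :=
  lam * x * (1 - M*x) - (M + (1-M^2)*x) * (1 + c * (x^(k+2) * (1 - M*x)))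

noncomputable def Q1 (k : ℕ) (lam M c x : ℝ) : ℝ :=
  lam * (1 - 2*M*x) - (1-M^2) * (1 + c * (x^(k+2) * (1 - M*x)))
    - (M + (1-M^2)*x) * (c * (((k:ℝ)+2) * x^(k+1) * (1-M*x) - M * x^(k+2)))

noncomputable def Q2 (k : ℕ) (lam M c x : ℝ) : ℝ :=
  -2*lam*M - 2*(1-M^2) * (c * (((k:ℝ)+2) * x^(k+1) * (1-M*x) - M * x^(k+2)))
    - (M + (1-M^2)*x) *
      (c * (((k:ℝ)+2)*((k:ℝ)+1)*x^k*(1-M*x) - 2*((k:ℝ)+2)*M*x^(k+1)))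

lemma hasDerivAt_Q (k : ℕ) (lam M c x : ℝ) :
    HasDerivAt (Q k lam M c) (Q1 k lam M c x) x := by
  have h := (((hasDerivAt_id x).const_mul lam).mul
      (((hasDerivAt_id x).const_mul M).const_sub 1)).sub
    ((((hasDerivAt_id x).const_mul (1-M^2)).const_add M).mul
      ((((hasDerivAt_pow (k+2) x).mul
        (((hasDerivAt_id x).const_mul M).const_sub 1)).const_mul c).const_add 1))
  refine h.congr_deriv ?_
  simp only [Q1, id, Nat.add_sub_cancel, Pi.mul_apply]; push_cast; ring

lemma hasDerivAt_Q1 (k : ℕ) (lam M c x : ℝ) :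
    HasDerivAt (Q1 k lam M c ·) (Q2 k lam M c x) x := by
  have h := (((((hasDerivAt_id x).const_mul M).const_mul 2).const_sub 1).const_mul lam).sub
    ((((((hasDerivAt_pow (k+2) x).mul
        (((hasDerivAt_id x).const_mul M).const_sub 1)).const_mul c).const_add 1).const_mul
        (1-M^2)).add
      ((((hasDerivAt_id x).const_mul (1-M^2)).const_add M).mul
        (((((hasDerivAt_pow (k+1) x).mul
            (((hasDerivAt_id x).const_mul M).const_sub 1)).const_mul ((k:ℝ)+2)).sub
          ((hasDerivAt_pow (k+2) x).const_mul M)).const_mul c)))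
  refine (h.congr_deriv ?_).congr_of_eventuallyEq (Filter.Eventually.of_forall fun t => ?_)
  · simp only [Q2, id, Nat.add_sub_cancel, Pi.mul_apply, Pi.sub_apply]; push_cast; ring
  · simp only [Q1, id, Pi.mul_apply, Pi.sub_apply, Pi.add_apply]; push_cast; ring

lemma Q_eval (k : ℕ) (lam : ℝ) :
    Q k lam ((k:ℝ)+2) (((k:ℝ)+3)^(k+1)*(lam - ((k:ℝ)+3)^2)) (1/((k:ℝ)+3)) = 0 := by
  have hN : ((k:ℝ)+3) ≠ 0 := by positivity
  have hP : ((k:ℝ)+3)^k ≠ 0 := pow_ne_zero _ hN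
  simp only [Q, one_div_pow, pow_succ]
  set P := ((k:ℝ)+3)^k with hPdef
  field_simp
  ring

lemma Q1_eval (k : ℕ) (lam : ℝ) :
    Q1 k lam ((k:ℝ)+2) (((k:ℝ)+3)^(k+1)*(lam - ((k:ℝ)+3)^2)) (1/((k:ℝ)+3)) = 0 := by
  have hN : ((k:ℝ)+3) ≠ 0 := by positivity
  have hP : ((k:ℝ)+3)^k ≠ 0 := pow_ne_zero _ hN
  simp only [Q1, one_div_pow, pow_succ]
  set P := ((k:ℝ)+3)^k with hPdef
  field_simp
  ring

lemma Q2_eval (k : ℕ) (lam : ℝ) :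
    Q2 k lam ((k:ℝ)+2) (((k:ℝ)+3)^(k+1)*(lam - ((k:ℝ)+3)^2)) (1/((k:ℝ)+3))
      = ((k:ℝ)+2) * (((k:ℝ)+1)*lam - ((k:ℝ)+3)^3) := by
  have hN : ((k:ℝ)+3) ≠ 0 := by positivity
  have hP : ((k:ℝ)+3)^k ≠ 0 := pow_ne_zero _ hN
  simp only [Q2, one_div_pow, pow_succ]
  set P := ((k:ℝ)+3)^k with hPdef
  field_simp
  ring

set_option maxHeartbeats 800000 in
lemma key (k : ℕ) (lam : ℝ) (hlam : ((k:ℝ)+3)^3 / (((k:ℝ)+3) - 2) < lam) :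
    ∃ a b : ℝ, 0 < a ∧ 0 < b ∧ ((k:ℝ)+2)*a + b = 1 ∧
      ((k:ℝ)+2)*(1/a) + 1/b <
        lam / (1 + ((k:ℝ)+3)^(k+1) * (lam - ((k:ℝ)+3)^2) * (a^(k+2)*b)) := by
  have hK0 : (0:ℝ) ≤ (k:ℝ) := Nat.cast_nonneg k
  set K := (k:ℝ) with hK
  set N := K + 3 with hN
  set M := K + 2 with hM
  set c := N^(k+1) * (lam - N^2) with hc
  have hNpos : (0:ℝ) < N := by rw [hN]; linarith
  have hMpos : (0:ℝ) < M := by rw [hM]; linarith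
  have hN2 : (0:ℝ) < N - 2 := by rw [hN]; linarith
  rw [div_lt_iff₀ hN2] at hlam
  have hlam3 : N^3 < lam * (K+1) := by
    have h21 : N - 2 = K + 1 := by rw [hN]; ring
    rw [h21] at hlam; exact hlam
  have hlamN2 : N^2 < lam := by nlinarith [hlam3, mul_pos hNpos hNpos]
  have hcpos : 0 < c := by
    rw [hc]; exact mul_pos (pow_pos hNpos _) (by linarith)
  have hQ00 : Q k lam M c (1/N) = 0 := by rw [hM, hc, hN, hK]; exact Q_eval k lam
  have hQ10 : Q1 k lam M c (1/N) = 0 := by rw [hM, hc, hN, hK]; exact Q1_eval k lam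
  have hQ2v : Q2 k lam M c (1/N) = M * ((K+1)*lam - N^3) := by
    rw [hM, hc, hN, hK]; exact Q2_eval k lam
  have hQ2pos : 0 < Q2 k lam M c (1/N) := by
    rw [hQ2v]; nlinarith [hlam3]
  have hslope := hasDerivAt_iff_tendsto_slope.mp (hasDerivAt_Q1 k lam M c (1/N))
  have hev : ∀ᶠ z in nhdsWithin (1/N) {(1/N)}ᶜ, 0 < slope (Q1 k lam M c ·) (1/N) z :=
    hslope.eventually (eventually_gt_nhds hQ2pos)
  rw [eventually_nhdsWithin_iff, Metric.eventually_nhds_iff] at hev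
  obtain ⟨ε, hε, hball⟩ := hev
  set t := min (ε/2) (1/(2*N*M)) with ht
  have ht0 : 0 < t := lt_min (by linarith) (by positivity)
  have hte : t ≤ ε/2 := min_le_left _ _
  have htb : t ≤ 1/(2*N*M) := min_le_right _ _
  set a := 1/N + t with hA
  set b := 1 - M*a with hB
  clear_value K N M c t a b
  have ha : 0 < a := by rw [hA]; positivity
  have hMt : M*t ≤ 1/(2*N) := by
    calc M*t ≤ M*(1/(2*N*M)) := by
          exact mul_le_mul_of_nonneg_left htb hMpos.le
      _ = 1/(2*N) := by field_simp
  have hMN : M*(1/N) = 1 - 1/N := by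
    rw [hM, hN]; field_simp; ring
  have hb : 0 < b := by
    have h1N : 0 < 1/N := by positivity
    have : M*a = M*(1/N) + M*t := by rw [hA]; ring
    rw [hB, this, hMN]
    have h2N : 1/(2*N) < 1/N := by rw [div_lt_div_iff₀ (by linarith) (by linarith)]; linarith
    linarith
  refine ⟨a, b, ha, hb, by rw [hB, hM]; ring, ?_⟩
  -- Q is positive at a
  have hlt : 1/N < a := by rw [hA]; linarith
  have hmono : StrictMonoOn (Q k lam M c) (Set.Icc (1/N) a) := by
    apply strictMonoOn_of_deriv_pos (convex_Icc _ _)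
    · have : Continuous (Q k lam M c) := by unfold Q; fun_prop
      exact this.continuousOn
    · intro z hz
      rw [interior_Icc] at hz
      rw [(hasDerivAt_Q k lam M c z).deriv]
      have hzne : z ≠ 1/N := ne_of_gt hz.1
      have hdp : 0 < z - 1/N := sub_pos.mpr hz.1
      have hdist : dist z (1/N) < ε := by
        rw [Real.dist_eq, abs_of_pos hdp]
        have : z < a := hz.2
        rw [hA] at this
        linarith
      have hs := hball hdist (by simpa using hzne)
      rw [slope_def_field, hQ10, sub_zero] at hs
      rcases div_pos_iff.mp hs with ⟨h1, _⟩ | ⟨_, h2⟩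
      · exact h1
      · linarith
  have hQa : 0 < Q k lam M c a := by
    have := hmono (Set.left_mem_Icc.mpr hlt.le) (Set.right_mem_Icc.mpr hlt.le) hlt
    rwa [hQ00] at this
  have hQa' : 0 < lam * a * b - (M + (1-M^2)*a) * (1 + c*(a^(k+2)*b)) := by
    unfold Q at hQa
    rw [← hB] at hQa
    exact hQa
  have hD : 0 < 1 + c*(a^(k+2)*b) := by
    have := mul_pos hcpos (mul_pos (pow_pos ha (k+2)) hb)
    linarith
  rw [lt_div_iff₀ hD, ← mul_lt_mul_iff_of_pos_right (mul_pos ha hb)]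
  have hMb : M*b + a = M + (1-M^2)*a := by rw [hB]; ring
  have h1 : (M*(1/a) + 1/b) * (a*b) = M*b + a := by
    field_simp
  have expand : (M*(1/a) + 1/b) * (1 + c*(a^(k+2)*b)) * (a*b)
      = (M + (1-M^2)*a) * (1 + c*(a^(k+2)*b)) := by
    calc (M*(1/a) + 1/b) * (1 + c*(a^(k+2)*b)) * (a*b)
        = ((M*(1/a) + 1/b) * (a*b)) * (1 + c*(a^(k+2)*b)) := by ring
      _ = (M*b + a) * (1 + c*(a^(k+2)*b)) := by rw [h1]
      _ = (M + (1-M^2)*a) * (1 + c*(a^(k+2)*b)) := by rw [hMb]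
  rw [expand]
  nlinarith [hQa']

theorem stmt_18 (n : ℕ) (hn : 3 ≤ n) (lam : ℝ) (hlam : (n : ℝ) ^ 3 / ((n : ℝ) - 2) < lam) :
    ∃ x : Fin n → ℝ, (∀ i, 0 < x i) ∧ (∑ i, x i = 1) ∧
      (∑ i, 1 / x i) <
        lam / (1 + (n : ℝ) ^ (n - 2) * (lam - (n : ℝ) ^ 2) * ∏ i, x i) := by
  obtain ⟨k, rfl⟩ : ∃ k, n = k + 3 := ⟨n - 3, by omega⟩
  have hcast : ((k+3 : ℕ) : ℝ) = (k:ℝ)+3 := by push_cast; ring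
  rw [hcast] at hlam
  obtain ⟨a, b, ha, hb, hsum, hineq⟩ := key k lam hlam
  refine ⟨Fin.snoc (fun _ => a) b, ?_, ?_, ?_⟩
  · intro i
    induction i using Fin.lastCases with
    | last => simpa using hb
    | cast i => simpa using ha
  · rw [Fin.sum_univ_castSucc]
    simp only [Fin.snoc_castSucc, Fin.snoc_last, Finset.sum_const, Finset.card_univ,
      Fintype.card_fin, nsmul_eq_mul]
    push_cast
    linarith [hsum]
  · have hsum1 : ∑ i : Fin (k+3), 1 / Fin.snoc (fun _ => a) b i = ((k:ℝ)+2)*(1/a) + 1/b := by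
      rw [Fin.sum_univ_castSucc]
      simp only [Fin.snoc_castSucc, Fin.snoc_last, Finset.sum_const, Finset.card_univ,
        Fintype.card_fin, nsmul_eq_mul]
      push_cast
      ring
    have hprod : ∏ i : Fin (k+3), Fin.snoc (fun _ => a) b i = a^(k+2) * b := by
      rw [Fin.prod_univ_castSucc]
      simp only [Fin.snoc_castSucc, Fin.snoc_last, Finset.prod_const, Finset.card_univ,
        Fintype.card_fin]
    rw [hsum1, hprod, hcast, show k+3-2 = k+1 from rfl]
    rw [show ((k:ℝ)+3) ^ (k + 1) * (lam - ((k:ℝ)+3) ^ 2) * (a ^ (k + 2) * b)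
      = ((k:ℝ)+3) ^ (k + 1) * (lam - ((k:ℝ)+3) ^ 2) * (a ^ (k + 2) * b) from rfl]
    exact hineq
end

section
/- For every natural n ≥ 3, p_n'(n/(n+1)) ≥ 0, where p_n(t) = ((n-1)-(n-2)t)·Σ_{k=1}^{n-1} k t^{k-1}; equivalently (1 + 1/n)^n ≥ 8/3 - 1/n + 1/(3n^2). -/
lemma aux_f (n : ℕ) (x : ℝ) :
    (x - 1)^2 * ∑ k ∈ Finset.range n, ((k:ℝ)+1)*x^k
      = n * x^(n+1) - (n+1) * x^n + 1 := by
  induction n with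
  | zero => simp
  | succ m ih =>
    rw [Finset.sum_range_succ, mul_add, ih]
    push_cast
    ring

lemma aux_g (n : ℕ) (x : ℝ) :
    (x - 1) * ∑ k ∈ Finset.range n, ((k:ℝ)+1)*((k:ℝ)*x^k)
      + 2 * x * ∑ k ∈ Finset.range n, ((k:ℝ)+1)*x^k
      = n * (n+1) * x^n := by
  induction n with
  | zero => simp
  | succ m ih =>
    rw [Finset.sum_range_succ, Finset.sum_range_succ]
    push_cast
    push_cast at ih
    linear_combination ih

lemma aux_pow (k : ℕ) (x : ℝ) : (k:ℝ) * x^(k-1) * x = (k:ℝ) * x^k := by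
  cases k with
  | zero => simp
  | succ m => rw [Nat.add_sub_cancel, mul_assoc, ← pow_succ]

lemma aux_choose3 {n : ℕ} (hn : 3 ≤ n) :
    (n.choose 3 : ℝ) = n*(n-1)*(n-2)/6 := by
  obtain ⟨m, rfl⟩ := Nat.exists_eq_add_of_le hn
  induction m with
  | zero => norm_num [Nat.choose]
  | succ k ih =>
    have h : (3+(k+1)).choose 3 = (3+k).choose 2 + (3+k).choose 3 := by
      rw [show 3+(k+1) = (3+k)+1 from rfl, Nat.choose_succ_succ]
    rw [h]
    push_cast [ih (by omega), Nat.cast_choose_two]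
    ring

lemma aux_key (n : ℕ) (hn : 3 ≤ n) :
    (1 + 1/(n:ℝ))^n ≥ 8/3 - 1/(n:ℝ) + 1/(3*(n:ℝ)^2) := by
  have hN : (3:ℝ) ≤ n := by exact_mod_cast hn
  have hN0 : (0:ℝ) < n := by linarith
  have hexp : (1 + 1/(n:ℝ))^n
      = ∑ k ∈ Finset.range (n+1), (1/(n:ℝ))^k * 1^(n-k) * (n.choose k) := by
    rw [← add_pow, add_comm]
  have hge : ∑ k ∈ Finset.range 4, (1/(n:ℝ))^k * 1^(n-k) * (n.choose k)
      ≤ ∑ k ∈ Finset.range (n+1), (1/(n:ℝ))^k * 1^(n-k) * (n.choose k) :=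
    Finset.sum_le_sum_of_subset_of_nonneg
      (Finset.range_subset_range.mpr (by omega)) (fun i _ _ => by positivity)
  have hcomp : ∑ k ∈ Finset.range 4, (1/(n:ℝ))^k * 1^(n-k) * (n.choose k)
      = 8/3 - 1/(n:ℝ) + 1/(3*(n:ℝ)^2) := by
    rw [Finset.sum_range_succ, Finset.sum_range_succ, Finset.sum_range_succ,
      Finset.sum_range_succ, Finset.sum_range_zero]
    rw [Nat.choose_zero_right, Nat.choose_one_right, Nat.cast_choose_two,
      aux_choose3 hn]
    field_simp
    ring
  rw [hexp, ge_iff_le, ← hcomp]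
  exact hge

set_option maxHeartbeats 1000000 in
theorem stmt_19 (n : ℕ) (hn : 3 ≤ n)
    (p : ℝ → ℝ)
    (hp : p = fun t => (((n : ℝ) - 1) - ((n : ℝ) - 2) * t) *
      ∑ k ∈ Finset.range (n - 1), ((k : ℝ) + 1) * t ^ k) :
    0 ≤ deriv p ((n : ℝ) / ((n : ℝ) + 1)) ∧
      (1 + 1 / (n : ℝ)) ^ n ≥ 8 / 3 - 1 / (n : ℝ) + 1 / (3 * (n : ℝ) ^ 2) := by
  have key := aux_key n hn
  refine ⟨?_, key⟩
  subst hp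
  have hN : (3:ℝ) ≤ n := by exact_mod_cast hn
  have hN0 : (0:ℝ) < n := by linarith
  have hN1 : (0:ℝ) < (n:ℝ) + 1 := by linarith
  set x0 : ℝ := (n:ℝ) / ((n:ℝ) + 1) with hx0def
  have hx0pos : 0 < x0 := by positivity
  have hx1 : x0 - 1 = -(1/((n:ℝ)+1)) := by
    rw [hx0def]; field_simp; ring
  -- derivative
  have hf : HasDerivAt (fun t:ℝ => ∑ k ∈ Finset.range (n-1), ((k:ℝ)+1)*t^k)
      (∑ k ∈ Finset.range (n-1), ((k:ℝ)+1)*((k:ℝ)*x0^(k-1))) x0 :=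
    HasDerivAt.fun_sum fun k _ => (hasDerivAt_pow k x0).const_mul _
  have hA : HasDerivAt (fun t:ℝ => ((n:ℝ)-1) - ((n:ℝ)-2)*t) (-((n:ℝ)-2)) x0 := by
    simpa using ((hasDerivAt_id x0).const_mul ((n:ℝ)-2)).const_sub ((n:ℝ)-1)
  have hP := hA.fun_mul hf
  rw [hP.deriv]
  -- abbreviations
  set S : ℝ := ∑ k ∈ Finset.range (n-1), ((k:ℝ)+1)*x0^k with hS
  set g : ℝ := ∑ k ∈ Finset.range (n-1), ((k:ℝ)+1)*((k:ℝ)*x0^(k-1)) with hg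
  set G : ℝ := ∑ k ∈ Finset.range (n-1), ((k:ℝ)+1)*((k:ℝ)*x0^k) with hG
  have hgG : g * x0 = G := by
    rw [hg, hG, Finset.sum_mul]
    exact Finset.sum_congr rfl fun k _ => by rw [mul_assoc, aux_pow]
  have hone : x0 * (1 + 1/(n:ℝ)) = 1 := by rw [hx0def]; field_simp
  have hx0e : x0 * ((n:ℝ)+1) = (n:ℝ) := by rw [hx0def]; field_simp
  have hm : n - 1 + 1 = n := by omega
  have h1 := aux_f (n-1) x0
  have h2 := aux_g (n-1) x0
  rw [hm] at h1
  have hcast : ((n-1:ℕ):ℝ) = (n:ℝ) - 1 := by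
    rw [Nat.cast_sub (by omega : 1 ≤ n), Nat.cast_one]
  rw [hcast] at h1 h2
  rw [← hS] at h1 h2
  rw [← hG] at h2
  set c := x0^n with hc
  set a := x0^(n-1) with ha
  have hac : a * x0 = c := by rw [ha, hc, ← pow_succ, hm]
  have hcpos : 0 < c := pow_pos hx0pos n
  have hcmul : c * (1 + 1/(n:ℝ))^n = 1 := by
    rw [hc, ← mul_pow, hone, one_pow]
  have hkey2 : (8*(n:ℝ)^2 - 3*(n:ℝ) + 1) * c ≤ 3*(n:ℝ)^2 := by
    have hB : (8/3 - 1/(n:ℝ) + 1/(3*(n:ℝ)^2))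
        = (8*(n:ℝ)^2 - 3*(n:ℝ) + 1)/(3*(n:ℝ)^2) := by
      field_simp
    have h := mul_le_mul_of_nonneg_right key hcpos.le
    rw [hB, div_mul_eq_mul_div, div_le_iff₀ (by positivity)] at h
    nlinarith [h, hcmul]
  clear_value x0 S g G c a
  have hNa : (n:ℝ) * a = ((n:ℝ)+1) * c := by
    linear_combination ((n:ℝ)+1) * hac - a * hx0e
  have hSval : S = ((n:ℝ)+1)^2*(1-2*c) := by
    rw [hx1] at h1
    have hne : ((n:ℝ)+1) ≠ 0 := by positivity
    field_simp at h1
    nlinarith [h1, hNa]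
  have hgval : (n:ℝ) * g = ((n:ℝ)+1)^3*(2*(n:ℝ)-(5*(n:ℝ)-1)*c) := by
    rw [← hgG, hx1, hSval] at h2
    have hne : ((n:ℝ)+1) ≠ 0 := by positivity
    field_simp at h2
    linear_combination (-((n:ℝ)+1))*h2 + (-g + 2*((n:ℝ)+1)^3*(1-2*c))*hx0e
      + (-((((n:ℝ)-1))*((n:ℝ)+1)^2))*hNa
  have hgoal : ((n:ℝ)*((n:ℝ)+1)) * (-((n:ℝ)-2)*S + ((n:ℝ)-1-((n:ℝ)-2)*x0)*g)
      = ((n:ℝ)+1)^3 * (3*(n:ℝ)^2 - (8*(n:ℝ)^2-3*(n:ℝ)+1)*c) := by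
    linear_combination (-(n:ℝ)*((n:ℝ)+1)*((n:ℝ)-2))*hSval
      + (((n:ℝ)-1)*((n:ℝ)+1) - ((n:ℝ)-2)*(n:ℝ))*hgval
      + (-((n:ℝ)-2)*(n:ℝ)*g)*hx0e
  have h3 : (0:ℝ) ≤ 3*(n:ℝ)^2 - (8*(n:ℝ)^2-3*(n:ℝ)+1)*c := by linarith
  have h4 : (0:ℝ) ≤ ((n:ℝ)+1)^3 * (3*(n:ℝ)^2 - (8*(n:ℝ)^2-3*(n:ℝ)+1)*c) :=
    mul_nonneg (by positivity) h3
  nlinarith [hgoal, h4, mul_pos hN0 hN1]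
end
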